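/- arXiv:1611.01184 — 2 statements merged into one kernel-verified Lean document; each statement's English description precedes it below -/
import Mathlib

section
/- Suppose (v, p, ω, b) is a smooth solution of Kolmogorov's system: div v = 0, ∂_t v + div(v⊗v) − 2ν₀ div((b/ω)D(v)) = −∇p, ∂_t ω + div(ωv) − κ₁ div((b/ω)∇ω) = −κ₂ω², ∂_t b + div(bv) − κ₃ div((b/ω)∇b) = −bω + κ₄(b/ω)|D(v)|² on ℝ × ℝ³. Then for any real a, c and any θ > 0, the rescaled quadruple v_θ(t,x) := θ^{a−c} v(θ^a t, θ^c x), p_θ(t,x) := θ^{2(a−c)} p(θ^a t, θ^c x), ω_θ(t,x) := θ^a ω(θ^a t, θ^c x), b_θ(t,x) := θ^{2(a−c)} b(θ^a t, θ^c x) also solves the same system. -/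
open Real

/-- Spatial partial derivative `∂_i f` of a function on space-time `ℝ × ℝ³`. -/
noncomputable def pdS (f : ℝ × (Fin 3 → ℝ) → ℝ) (i : Fin 3) (q : ℝ × (Fin 3 → ℝ)) : ℝ :=
  fderiv ℝ (fun x => f (q.1, x)) q.2 (Pi.single i 1)

/-- Time derivative `∂_t f` of a function on space-time `ℝ × ℝ³`. -/
noncomputable def pdT (f : ℝ × (Fin 3 → ℝ) → ℝ) (q : ℝ × (Fin 3 → ℝ)) : ℝ :=
  deriv (fun t => f (t, q.2)) q.1

/-- Symmetric gradient `D(v)_{ij} = (∂_i v_j + ∂_j v_i)/2`. -/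
noncomputable def symGrad (v : ℝ × (Fin 3 → ℝ) → Fin 3 → ℝ) (i j : Fin 3)
    (q : ℝ × (Fin 3 → ℝ)) : ℝ :=
  (pdS (fun q => v q j) i q + pdS (fun q => v q i) j q) / 2

/-- Kolmogorov's two-equation system of turbulence on all of `ℝ × ℝ³`:
`div v = 0`, `∂_t v + div(v⊗v) − 2ν₀ div((b/ω)D(v)) = −∇p`,
`∂_t ω + div(ωv) − κ₁ div((b/ω)∇ω) = −κ₂ ω²`,
`∂_t b + div(bv) − κ₃ div((b/ω)∇b) = −bω + κ₄ (b/ω)|D(v)|²`. -/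
def IsKolmogorovSolution (ν₀ κ₁ κ₂ κ₃ κ₄ : ℝ)
    (v : ℝ × (Fin 3 → ℝ) → Fin 3 → ℝ) (p ω b : ℝ × (Fin 3 → ℝ) → ℝ) : Prop :=
  (∀ q, ∑ i, pdS (fun q => v q i) i q = 0) ∧
  (∀ q, ∀ j, pdT (fun q => v q j) q + ∑ i, pdS (fun q => v q i * v q j) i q
      - 2 * ν₀ * ∑ i, pdS (fun q => b q / ω q * symGrad v i j q) i q
      = - pdS p j q) ∧
  (∀ q, pdT ω q + ∑ i, pdS (fun q => ω q * v q i) i q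
      - κ₁ * ∑ i, pdS (fun q => b q / ω q * pdS ω i q) i q = - κ₂ * (ω q) ^ 2) ∧
  (∀ q, pdT b q + ∑ i, pdS (fun q => b q * v q i) i q
      - κ₃ * ∑ i, pdS (fun q => b q / ω q * pdS b i q) i q
      = - b q * ω q + κ₄ * (b q / ω q) * ∑ i, ∑ j, (symGrad v i j q) ^ 2)

/-- The continuous linear equivalence given by scalar multiplication by a nonzero real. -/
noncomputable def smulEquivK {E : Type*} [NormedAddCommGroup E] [NormedSpace ℝ E]
    [FiniteDimensional ℝ E] (k : ℝ) (hk : k ≠ 0) : E ≃L[ℝ] E :=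
  (LinearEquiv.smulOfNeZero ℝ E k hk).toContinuousLinearEquiv

lemma smulEquivK_apply {E : Type*} [NormedAddCommGroup E] [NormedSpace ℝ E]
    [FiniteDimensional ℝ E] (k : ℝ) (hk : k ≠ 0) (x : E) : smulEquivK k hk x = k • x := by
  simp [smulEquivK, LinearEquiv.smulOfNeZero, LinearEquiv.smulOfUnit]

/-- Unconditional version of `fderiv_const_mul`. -/
lemma fderiv_const_mul'' {E : Type*} [NormedAddCommGroup E] [NormedSpace ℝ E]
    (g : E → ℝ) (C : ℝ) (x : E) :
    fderiv ℝ (fun y => C * g y) x = C • fderiv ℝ g x := by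
  rcases eq_or_ne C 0 with rfl | hC
  · simp
  by_cases hg : DifferentiableAt ℝ g x
  · exact fderiv_const_mul hg C
  · have hg' : ¬ DifferentiableAt ℝ (fun y => C * g y) x := by
      intro h
      have h2 := h.const_mul C⁻¹
      simp only [← mul_assoc, inv_mul_cancel₀ hC, one_mul] at h2
      exact hg h2
    rw [fderiv_zero_of_not_differentiableAt hg, fderiv_zero_of_not_differentiableAt hg']
    simp

/-- How a spatial partial derivative transforms under parabolic rescaling. -/
lemma pdS_scale (f : ℝ × (Fin 3 → ℝ) → ℝ) (C τ k : ℝ) (hk : k ≠ 0)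
    (i : Fin 3) (q : ℝ × (Fin 3 → ℝ)) :
    pdS (fun q => C * f (τ * q.1, fun i => k * q.2 i)) i q
      = C * k * pdS f i (τ * q.1, fun i => k * q.2 i) := by
  unfold pdS
  have hfun : (fun x : Fin 3 → ℝ => C * f (τ * q.1, fun i => k * x i))
      = fun x => C * ((fun y => f (τ * q.1, y)) ∘ (smulEquivK k hk)) x := by
    funext x
    simp only [Function.comp, smulEquivK_apply]
    congr 1
  rw [hfun, fderiv_const_mul'', (smulEquivK k hk).comp_right_fderiv]
  simp only [ContinuousLinearMap.smul_apply, ContinuousLinearMap.coe_comp',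
    Function.comp, ContinuousLinearEquiv.coe_coe, smulEquivK_apply, map_smul,
    smul_eq_mul]
  have : ((k : ℝ) • q.2) = fun i => k * q.2 i := by funext j; simp
  rw [this]; ring

/-- How a time derivative transforms under parabolic rescaling. -/
lemma pdT_scale (f : ℝ × (Fin 3 → ℝ) → ℝ) (C τ k : ℝ) (hτ : τ ≠ 0)
    (q : ℝ × (Fin 3 → ℝ)) :
    pdT (fun q => C * f (τ * q.1, fun i => k * q.2 i)) q
      = C * τ * pdT f (τ * q.1, fun i => k * q.2 i) := by
  unfold pdT
  have hfun : (fun t : ℝ => C * f (τ * t, fun i => k * q.2 i))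
      = fun t => C * ((fun s => f (s, fun i => k * q.2 i)) ∘ (smulEquivK τ hτ)) t := by
    funext t
    simp [Function.comp, smulEquivK_apply, smul_eq_mul]
  rw [hfun, ← fderiv_apply_one_eq_deriv, ← fderiv_apply_one_eq_deriv, fderiv_const_mul'',
    (smulEquivK τ hτ).comp_right_fderiv]
  simp only [ContinuousLinearMap.smul_apply, ContinuousLinearMap.coe_comp',
    Function.comp, ContinuousLinearEquiv.coe_coe, smulEquivK_apply, smul_eq_mul, mul_one]
  rw [show τ = τ • (1:ℝ) by simp, map_smul]
  simp only [smul_eq_mul, mul_one]; ring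

/-- scaling invariance of Kolmogorov's system. If `(v, p, ω, b)` is a
smooth (C²) solution, then for any reals `a, c` and any `θ > 0`, the rescaled quadruple
`v_θ(t,x) = θ^{a−c} v(θ^a t, θ^c x)`, `p_θ(t,x) = θ^{2(a−c)} p(θ^a t, θ^c x)`,
`ω_θ(t,x) = θ^a ω(θ^a t, θ^c x)`, `b_θ(t,x) = θ^{2(a−c)} b(θ^a t, θ^c x)`
also solves the system. -/
theorem kolmogorov_scaling_invariance (ν₀ κ₁ κ₂ κ₃ κ₄ : ℝ)
    (hν : 0 < ν₀) (h1 : 0 < κ₁) (h2 : 0 < κ₂) (h3 : 0 < κ₃) (h4 : 0 < κ₄)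
    (v : ℝ × (Fin 3 → ℝ) → Fin 3 → ℝ) (p ω b : ℝ × (Fin 3 → ℝ) → ℝ)
    (hv : ∀ j, ContDiff ℝ 2 (fun q => v q j))
    (hp : ContDiff ℝ 2 p) (hω : ContDiff ℝ 2 ω) (hb : ContDiff ℝ 2 b)
    (hsol : IsKolmogorovSolution ν₀ κ₁ κ₂ κ₃ κ₄ v p ω b)
    (a c θ : ℝ) (hθ : 0 < θ) :
    IsKolmogorovSolution ν₀ κ₁ κ₂ κ₃ κ₄
      (fun q => fun j => θ ^ (a - c) * v (θ ^ a * q.1, fun i => θ ^ c * q.2 i) j)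
      (fun q => θ ^ (2 * (a - c)) * p (θ ^ a * q.1, fun i => θ ^ c * q.2 i))
      (fun q => θ ^ a * ω (θ ^ a * q.1, fun i => θ ^ c * q.2 i))
      (fun q => θ ^ (2 * (a - c)) * b (θ ^ a * q.1, fun i => θ ^ c * q.2 i)) := by
  obtain ⟨hdiv, hmom, hom, hbe⟩ := hsol
  have hk : θ ^ c ≠ 0 := (Real.rpow_pos_of_pos hθ c).ne'
  have hτ : θ ^ a ≠ 0 := (Real.rpow_pos_of_pos hθ a).ne'
  have P2 : ∀ x y z : ℝ, x + y = z → θ ^ x * θ ^ y = θ ^ z := by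
    intro x y z h; rw [← Real.rpow_add hθ, h]
  have PD : ∀ x y z : ℝ, x - y = z → θ ^ x / θ ^ y = θ ^ z := by
    intro x y z h; rw [← Real.rpow_sub hθ, h]
  -- symmetric gradient of the rescaled velocity
  have hsym : ∀ (i j : Fin 3) (q : ℝ × (Fin 3 → ℝ)),
      symGrad (fun q => fun j => θ ^ (a - c) * v (θ ^ a * q.1, fun i => θ ^ c * q.2 i) j) i j q
        = θ ^ a * symGrad v i j (θ ^ a * q.1, fun l => θ ^ c * q.2 l) := by
    intro i j q
    simp only [symGrad, pdS_scale (fun q => v q j) (θ ^ (a - c)) (θ ^ a) (θ ^ c) hk,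
      pdS_scale (fun q => v q i) (θ ^ (a - c)) (θ ^ a) (θ ^ c) hk,
      P2 (a - c) c a (by ring)]
    ring
  refine ⟨?_, ?_, ?_, ?_⟩
  · -- divergence-free
    intro q
    have key : ∀ i : Fin 3,
        pdS (fun q => θ ^ (a - c) * v (θ ^ a * q.1, fun l => θ ^ c * q.2 l) i) i q
          = θ ^ a * pdS (fun q => v q i) i (θ ^ a * q.1, fun l => θ ^ c * q.2 l) := by
      intro i
      rw [pdS_scale (fun q => v q i) (θ ^ (a - c)) (θ ^ a) (θ ^ c) hk i q,
        P2 (a - c) c a (by ring)]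
    simp only [key, ← Finset.mul_sum]
    rw [hdiv]; ring
  · -- momentum equation
    intro q j
    have hT : pdT (fun q => θ ^ (a - c) * v (θ ^ a * q.1, fun l => θ ^ c * q.2 l) j) q
        = θ ^ (2 * a - c) * pdT (fun q => v q j) (θ ^ a * q.1, fun l => θ ^ c * q.2 l) := by
      rw [pdT_scale (fun q => v q j) (θ ^ (a - c)) (θ ^ a) (θ ^ c) hτ q,
        P2 (a - c) a (2 * a - c) (by ring)]
    have hCV : ∀ i : Fin 3,
        pdS (fun q => θ ^ (a - c) * v (θ ^ a * q.1, fun l => θ ^ c * q.2 l) i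
            * (θ ^ (a - c) * v (θ ^ a * q.1, fun l => θ ^ c * q.2 l) j)) i q
          = θ ^ (2 * a - c)
            * pdS (fun q => v q i * v q j) i (θ ^ a * q.1, fun l => θ ^ c * q.2 l) := by
      intro i
      have e : (fun q : ℝ × (Fin 3 → ℝ) =>
            θ ^ (a - c) * v (θ ^ a * q.1, fun l => θ ^ c * q.2 l) i
              * (θ ^ (a - c) * v (θ ^ a * q.1, fun l => θ ^ c * q.2 l) j))
          = fun q => θ ^ (a - c) * θ ^ (a - c)
              * (v (θ ^ a * q.1, fun l => θ ^ c * q.2 l) i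
                * v (θ ^ a * q.1, fun l => θ ^ c * q.2 l) j) := by
        funext q'; ring
      rw [e, pdS_scale (fun q => v q i * v q j)
          (θ ^ (a - c) * θ ^ (a - c)) (θ ^ a) (θ ^ c) hk i q,
        P2 (a - c) (a - c) (2 * (a - c)) (by ring), P2 (2 * (a - c)) c (2 * a - c) (by ring)]
    have hDF : ∀ i : Fin 3,
        pdS (fun q => θ ^ (2 * (a - c)) * b (θ ^ a * q.1, fun l => θ ^ c * q.2 l)
              / (θ ^ a * ω (θ ^ a * q.1, fun l => θ ^ c * q.2 l))
            * symGrad (fun q => fun j => θ ^ (a - c)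
                * v (θ ^ a * q.1, fun i => θ ^ c * q.2 i) j) i j q) i q
          = θ ^ (2 * a - c)
            * pdS (fun q => b q / ω q * symGrad v i j q) i
                (θ ^ a * q.1, fun l => θ ^ c * q.2 l) := by
      intro i
      have e : (fun q : ℝ × (Fin 3 → ℝ) =>
            θ ^ (2 * (a - c)) * b (θ ^ a * q.1, fun l => θ ^ c * q.2 l)
              / (θ ^ a * ω (θ ^ a * q.1, fun l => θ ^ c * q.2 l))
            * symGrad (fun q => fun j => θ ^ (a - c)
                * v (θ ^ a * q.1, fun i => θ ^ c * q.2 i) j) i j q)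
          = fun q => θ ^ (2 * (a - c))
              * (b (θ ^ a * q.1, fun l => θ ^ c * q.2 l)
                  / ω (θ ^ a * q.1, fun l => θ ^ c * q.2 l)
                * symGrad v i j (θ ^ a * q.1, fun l => θ ^ c * q.2 l)) := by
        funext q'
        rw [hsym i j q']
        rcases eq_or_ne (ω (θ ^ a * q'.1, fun l => θ ^ c * q'.2 l)) 0 with h0 | h0
        · simp [h0]
        · field_simp
      rw [e, pdS_scale (fun q => b q / ω q * symGrad v i j q)
          (θ ^ (2 * (a - c))) (θ ^ a) (θ ^ c) hk i q,
        P2 (2 * (a - c)) c (2 * a - c) (by ring)]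
    have hPr : pdS (fun q => θ ^ (2 * (a - c)) * p (θ ^ a * q.1, fun l => θ ^ c * q.2 l)) j q
        = θ ^ (2 * a - c) * pdS p j (θ ^ a * q.1, fun l => θ ^ c * q.2 l) := by
      rw [pdS_scale p (θ ^ (2 * (a - c))) (θ ^ a) (θ ^ c) hk j q,
        P2 (2 * (a - c)) c (2 * a - c) (by ring)]
    simp only [hT, hCV, hDF, hPr, ← Finset.mul_sum]
    linear_combination θ ^ (2 * a - c) * hmom (θ ^ a * q.1, fun l => θ ^ c * q.2 l) j
  · -- ω equation
    intro q
    have hT3 : pdT (fun q => θ ^ a * ω (θ ^ a * q.1, fun l => θ ^ c * q.2 l)) q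
        = θ ^ (2 * a) * pdT ω (θ ^ a * q.1, fun l => θ ^ c * q.2 l) := by
      rw [pdT_scale ω (θ ^ a) (θ ^ a) (θ ^ c) hτ q, P2 a a (2 * a) (by ring)]
    have hCV3 : ∀ i : Fin 3,
        pdS (fun q => θ ^ a * ω (θ ^ a * q.1, fun l => θ ^ c * q.2 l)
            * (θ ^ (a - c) * v (θ ^ a * q.1, fun l => θ ^ c * q.2 l) i)) i q
          = θ ^ (2 * a)
            * pdS (fun q => ω q * v q i) i (θ ^ a * q.1, fun l => θ ^ c * q.2 l) := by
      intro i
      have e : (fun q : ℝ × (Fin 3 → ℝ) =>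
            θ ^ a * ω (θ ^ a * q.1, fun l => θ ^ c * q.2 l)
              * (θ ^ (a - c) * v (θ ^ a * q.1, fun l => θ ^ c * q.2 l) i))
          = fun q => θ ^ a * θ ^ (a - c)
              * (ω (θ ^ a * q.1, fun l => θ ^ c * q.2 l)
                * v (θ ^ a * q.1, fun l => θ ^ c * q.2 l) i) := by
        funext q'; ring
      rw [e, pdS_scale (fun q => ω q * v q i) (θ ^ a * θ ^ (a - c)) (θ ^ a) (θ ^ c) hk i q,
        P2 a (a - c) (2 * a - c) (by ring), P2 (2 * a - c) c (2 * a) (by ring)]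
    have hpdω : ∀ (i : Fin 3) (q' : ℝ × (Fin 3 → ℝ)),
        pdS (fun q => θ ^ a * ω (θ ^ a * q.1, fun l => θ ^ c * q.2 l)) i q'
          = θ ^ (a + c) * pdS ω i (θ ^ a * q'.1, fun l => θ ^ c * q'.2 l) := by
      intro i q'
      rw [pdS_scale ω (θ ^ a) (θ ^ a) (θ ^ c) hk i q', P2 a c (a + c) (by ring)]
    have hDF3 : ∀ i : Fin 3,
        pdS (fun q => θ ^ (2 * (a - c)) * b (θ ^ a * q.1, fun l => θ ^ c * q.2 l)
              / (θ ^ a * ω (θ ^ a * q.1, fun l => θ ^ c * q.2 l))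
            * pdS (fun q => θ ^ a * ω (θ ^ a * q.1, fun l => θ ^ c * q.2 l)) i q) i q
          = θ ^ (2 * a)
            * pdS (fun q => b q / ω q * pdS ω i q) i
                (θ ^ a * q.1, fun l => θ ^ c * q.2 l) := by
      intro i
      have e : (fun q : ℝ × (Fin 3 → ℝ) =>
            θ ^ (2 * (a - c)) * b (θ ^ a * q.1, fun l => θ ^ c * q.2 l)
              / (θ ^ a * ω (θ ^ a * q.1, fun l => θ ^ c * q.2 l))
            * pdS (fun q => θ ^ a * ω (θ ^ a * q.1, fun l => θ ^ c * q.2 l)) i q)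
          = fun q => θ ^ (2 * (a - c)) / θ ^ a * θ ^ (a + c)
              * (b (θ ^ a * q.1, fun l => θ ^ c * q.2 l)
                  / ω (θ ^ a * q.1, fun l => θ ^ c * q.2 l)
                * pdS ω i (θ ^ a * q.1, fun l => θ ^ c * q.2 l)) := by
        funext q'
        rw [hpdω i q', mul_div_mul_comm]
        ring
      rw [e, pdS_scale (fun q => b q / ω q * pdS ω i q)
          (θ ^ (2 * (a - c)) / θ ^ a * θ ^ (a + c)) (θ ^ a) (θ ^ c) hk i q,
        PD (2 * (a - c)) a (a - 2 * c) (by ring), P2 (a - 2 * c) (a + c) (2 * a - c) (by ring),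
        P2 (2 * a - c) c (2 * a) (by ring)]
    have hsq : ∀ X : ℝ, (θ ^ a * X) ^ 2 = θ ^ (2 * a) * X ^ 2 := by
      intro X
      rw [mul_pow, sq (θ ^ a), P2 a a (2 * a) (by ring)]
    simp only [hT3, hCV3, hDF3, hsq, ← Finset.mul_sum]
    linear_combination θ ^ (2 * a) * hom (θ ^ a * q.1, fun l => θ ^ c * q.2 l)
  · -- b equation
    intro q
    have hT4 : pdT (fun q => θ ^ (2 * (a - c)) * b (θ ^ a * q.1, fun l => θ ^ c * q.2 l)) q
        = θ ^ (3 * a - 2 * c) * pdT b (θ ^ a * q.1, fun l => θ ^ c * q.2 l) := by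
      rw [pdT_scale b (θ ^ (2 * (a - c))) (θ ^ a) (θ ^ c) hτ q,
        P2 (2 * (a - c)) a (3 * a - 2 * c) (by ring)]
    have hCV4 : ∀ i : Fin 3,
        pdS (fun q => θ ^ (2 * (a - c)) * b (θ ^ a * q.1, fun l => θ ^ c * q.2 l)
            * (θ ^ (a - c) * v (θ ^ a * q.1, fun l => θ ^ c * q.2 l) i)) i q
          = θ ^ (3 * a - 2 * c)
            * pdS (fun q => b q * v q i) i (θ ^ a * q.1, fun l => θ ^ c * q.2 l) := by
      intro i
      have e : (fun q : ℝ × (Fin 3 → ℝ) =>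
            θ ^ (2 * (a - c)) * b (θ ^ a * q.1, fun l => θ ^ c * q.2 l)
              * (θ ^ (a - c) * v (θ ^ a * q.1, fun l => θ ^ c * q.2 l) i))
          = fun q => θ ^ (2 * (a - c)) * θ ^ (a - c)
              * (b (θ ^ a * q.1, fun l => θ ^ c * q.2 l)
                * v (θ ^ a * q.1, fun l => θ ^ c * q.2 l) i) := by
        funext q'; ring
      rw [e, pdS_scale (fun q => b q * v q i)
          (θ ^ (2 * (a - c)) * θ ^ (a - c)) (θ ^ a) (θ ^ c) hk i q,
        P2 (2 * (a - c)) (a - c) (3 * a - 3 * c) (by ring),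
        P2 (3 * a - 3 * c) c (3 * a - 2 * c) (by ring)]
    have hpdb : ∀ (i : Fin 3) (q' : ℝ × (Fin 3 → ℝ)),
        pdS (fun q => θ ^ (2 * (a - c)) * b (θ ^ a * q.1, fun l => θ ^ c * q.2 l)) i q'
          = θ ^ (2 * a - c) * pdS b i (θ ^ a * q'.1, fun l => θ ^ c * q'.2 l) := by
      intro i q'
      rw [pdS_scale b (θ ^ (2 * (a - c))) (θ ^ a) (θ ^ c) hk i q',
        P2 (2 * (a - c)) c (2 * a - c) (by ring)]
    have hDF4 : ∀ i : Fin 3,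
        pdS (fun q => θ ^ (2 * (a - c)) * b (θ ^ a * q.1, fun l => θ ^ c * q.2 l)
              / (θ ^ a * ω (θ ^ a * q.1, fun l => θ ^ c * q.2 l))
            * pdS (fun q => θ ^ (2 * (a - c))
                * b (θ ^ a * q.1, fun l => θ ^ c * q.2 l)) i q) i q
          = θ ^ (3 * a - 2 * c)
            * pdS (fun q => b q / ω q * pdS b i q) i
                (θ ^ a * q.1, fun l => θ ^ c * q.2 l) := by
      intro i
      have e : (fun q : ℝ × (Fin 3 → ℝ) =>
            θ ^ (2 * (a - c)) * b (θ ^ a * q.1, fun l => θ ^ c * q.2 l)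
              / (θ ^ a * ω (θ ^ a * q.1, fun l => θ ^ c * q.2 l))
            * pdS (fun q => θ ^ (2 * (a - c))
                * b (θ ^ a * q.1, fun l => θ ^ c * q.2 l)) i q)
          = fun q => θ ^ (2 * (a - c)) / θ ^ a * θ ^ (2 * a - c)
              * (b (θ ^ a * q.1, fun l => θ ^ c * q.2 l)
                  / ω (θ ^ a * q.1, fun l => θ ^ c * q.2 l)
                * pdS b i (θ ^ a * q.1, fun l => θ ^ c * q.2 l)) := by
        funext q'
        rw [hpdb i q', mul_div_mul_comm]
        ring
      rw [e, pdS_scale (fun q => b q / ω q * pdS b i q)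
          (θ ^ (2 * (a - c)) / θ ^ a * θ ^ (2 * a - c)) (θ ^ a) (θ ^ c) hk i q,
        PD (2 * (a - c)) a (a - 2 * c) (by ring),
        P2 (a - 2 * c) (2 * a - c) (3 * a - 3 * c) (by ring),
        P2 (3 * a - 3 * c) c (3 * a - 2 * c) (by ring)]
    have hsq : ∀ X : ℝ, (θ ^ a * X) ^ 2 = θ ^ (2 * a) * X ^ 2 := by
      intro X
      rw [mul_pow, sq (θ ^ a), P2 a a (2 * a) (by ring)]
    have hdivq : θ ^ (2 * (a - c)) * b (θ ^ a * q.1, fun l => θ ^ c * q.2 l)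
          / (θ ^ a * ω (θ ^ a * q.1, fun l => θ ^ c * q.2 l))
        = θ ^ (a - 2 * c) * (b (θ ^ a * q.1, fun l => θ ^ c * q.2 l)
            / ω (θ ^ a * q.1, fun l => θ ^ c * q.2 l)) := by
      rw [mul_div_mul_comm, PD (2 * (a - c)) a (a - 2 * c) (by ring)]
    simp only [hT4, hCV4, hDF4, hsym, hsq, hdivq, ← Finset.mul_sum]
    linear_combination θ ^ (3 * a - 2 * c) * hbe (θ ^ a * q.1, fun l => θ ^ c * q.2 l)
      + (b (θ ^ a * q.1, fun l => θ ^ c * q.2 l)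
            * ω (θ ^ a * q.1, fun l => θ ^ c * q.2 l))
          * P2 (2 * (a - c)) a (3 * a - 2 * c) (by ring)
      - (κ₄ * (b (θ ^ a * q.1, fun l => θ ^ c * q.2 l)
            / ω (θ ^ a * q.1, fun l => θ ^ c * q.2 l))
          * (∑ i, ∑ j, symGrad v i j (θ ^ a * q.1, fun l => θ ^ c * q.2 l) ^ 2))
          * P2 (a - 2 * c) (2 * a) (3 * a - 2 * c) (by ring)
end

section
/- Suppose (a_k), (b_k) are sequences of measurable functions on a finite measure space with a_k ≥ 0, a_k → a almost everywhere, a > 0 a.e., 0 ≤ b_k ≤ M uniformly, and a_k·b_k → a·c strongly in L². Then b_k → c almost everywhere (along a subsequence) and b_k → c strongly in L^q for every q ∈ [1, ∞). -/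
open MeasureTheory ENNReal Filter

lemma aux_subseq_ae {X : Type*} [MeasurableSpace X]
    (ν : Measure X) [IsFiniteMeasure ν]
    (a c : X → ℝ) (aseq bseq : ℕ → X → ℝ)
    (ham : ∀ k, Measurable (aseq k)) (hbm : ∀ k, Measurable (bseq k))
    (ham' : Measurable a) (hcm : Measurable c)
    (hae : ∀ᵐ x ∂ν, Tendsto (fun k => aseq k x) atTop (nhds (a x)))
    (ha0 : ∀ᵐ x ∂ν, 0 < a x)
    (hL2 : Tendsto (fun k => eLpNorm (fun x => aseq k x * bseq k x - a x * c x) 2 ν)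
      atTop (nhds 0))
    (ns : ℕ → ℕ) (hns : Tendsto ns atTop atTop) :
    ∃ ms : ℕ → ℕ, StrictMono ms ∧
      ∀ᵐ x ∂ν, Tendsto (fun k => bseq (ns (ms k)) x) atTop (nhds (c x)) := by
  have hL2' : Tendsto (fun k => eLpNorm
      ((fun x => aseq (ns k) x * bseq (ns k) x) - (fun x => a x * c x)) 2 ν)
      atTop (nhds 0) := hL2.comp hns
  have tim : TendstoInMeasure ν (fun k x => aseq (ns k) x * bseq (ns k) x) atTop
      (fun x => a x * c x) := by
    refine tendstoInMeasure_of_tendsto_eLpNorm (by norm_num)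
      (fun k => ((ham (ns k)).mul (hbm (ns k))).aestronglyMeasurable)
      ((ham'.mul hcm).aestronglyMeasurable) hL2'
  obtain ⟨ms, hms, hmsae⟩ := tim.exists_seq_tendsto_ae
  refine ⟨ms, hms, ?_⟩
  filter_upwards [hmsae, hae, ha0] with x h1 h2 h3
  have h2' : Tendsto (fun k => aseq (ns (ms k)) x) atTop (nhds (a x)) :=
    h2.comp (hns.comp hms.tendsto_atTop)
  have hdiv : Tendsto (fun k => aseq (ns (ms k)) x * bseq (ns (ms k)) x / aseq (ns (ms k)) x)
      atTop (nhds (a x * c x / a x)) := h1.div h2' h3.ne'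
  rw [mul_div_cancel_left₀ _ h3.ne'] at hdiv
  have hev : ∀ᶠ k in atTop, aseq (ns (ms k)) x ≠ 0 := by
    filter_upwards [h2'.eventually (eventually_gt_nhds h3)] with k hk
    exact hk.ne'
  refine hdiv.congr' ?_
  filter_upwards [hev] with k hk
  rw [mul_comm, mul_div_assoc, div_self hk, mul_one]

/-- on a finite measure space, if `a_k ≥ 0`, `a_k → a` a.e. with
`a > 0` a.e., `0 ≤ b_k ≤ M` uniformly, and `a_k b_k → a·c` strongly in `L²`, then
(along a subsequence) `b_k → c` a.e., and `b_k → c` strongly in `L^q` for every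
`q ∈ [1, ∞)`. -/
theorem ae_and_Lq_convergence_from_product {X : Type*} [MeasurableSpace X]
    (ν : Measure X) [IsFiniteMeasure ν]
    (a c : X → ℝ) (aseq bseq : ℕ → X → ℝ) (M : ℝ) (hM : 0 < M)
    (ham : ∀ k, Measurable (aseq k)) (hbm : ∀ k, Measurable (bseq k))
    (ham' : Measurable a) (hcm : Measurable c)
    (hapos : ∀ k, ∀ᵐ x ∂ν, 0 ≤ aseq k x)
    (hae : ∀ᵐ x ∂ν, Tendsto (fun k => aseq k x) atTop (nhds (a x)))
    (ha0 : ∀ᵐ x ∂ν, 0 < a x)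
    (hbbd : ∀ k, ∀ᵐ x ∂ν, 0 ≤ bseq k x ∧ bseq k x ≤ M)
    (hL2 : Tendsto (fun k => eLpNorm (fun x => aseq k x * bseq k x - a x * c x) 2 ν)
      atTop (nhds 0)) :
    (∃ φ : ℕ → ℕ, StrictMono φ ∧
      ∀ᵐ x ∂ν, Tendsto (fun k => bseq (φ k) x) atTop (nhds (c x))) ∧
    (∀ q : ℝ, 1 ≤ q →
      Tendsto (fun k => eLpNorm (fun x => bseq k x - c x) (ENNReal.ofReal q) ν)
        atTop (nhds 0)) := by
  obtain ⟨φ, hφ, hφae⟩ := aux_subseq_ae ν a c aseq bseq ham hbm ham' hcm hae ha0 hL2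
    id tendsto_id
  have hcbd : ∀ᵐ x ∂ν, ‖c x‖ ≤ M := by
    have hball : ∀ᵐ x ∂ν, ∀ k, 0 ≤ bseq k x ∧ bseq k x ≤ M := ae_all_iff.2 hbbd
    filter_upwards [hφae, hball] with x h1 h2
    rw [Real.norm_eq_abs, abs_le]
    constructor
    · have := ge_of_tendsto h1 (Eventually.of_forall fun k => (h2 (φ k)).1)
      linarith
    · exact le_of_tendsto h1 (Eventually.of_forall fun k => (h2 (φ k)).2)
  refine ⟨⟨φ, hφ, hφae⟩, fun q hq => ?_⟩
  set p : ℝ≥0∞ := ENNReal.ofReal q with hp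
  have hp1 : 1 ≤ p := by
    rw [hp, ← ENNReal.ofReal_one]
    exact ENNReal.ofReal_le_ofReal hq
  have hp' : p ≠ ∞ := ENNReal.ofReal_ne_top
  apply tendsto_of_subseq_tendsto
  intro ns hns
  obtain ⟨ms, _, hmsae⟩ := aux_subseq_ae ν a c aseq bseq ham hbm ham' hcm hae ha0 hL2 ns hns
  refine ⟨ms, ?_⟩
  have hui : UnifIntegrable (fun n => bseq (ns (ms n))) p ν := by
    refine unifIntegrable_of hp1 hp' (fun n => (hbm _).aestronglyMeasurable) fun ε hε => ?_
    refine ⟨M.toNNReal + 1, fun i => ?_⟩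
    have h0 : ({ x | (M.toNNReal + 1 : NNReal) ≤ ‖bseq (ns (ms i)) x‖₊ }.indicator
        (bseq (ns (ms i)))) =ᵐ[ν] 0 := by
      filter_upwards [hbbd (ns (ms i))] with x hx
      have hnorm : ‖bseq (ns (ms i)) x‖ ≤ M := by
        rw [Real.norm_eq_abs, abs_le]; exact ⟨by linarith [hx.1], hx.2⟩
      have hx' : x ∉ { x | (M.toNNReal + 1 : NNReal) ≤ ‖bseq (ns (ms i)) x‖₊ } := by
        simp only [Set.mem_setOf_eq, not_le]
        rw [← NNReal.coe_lt_coe, NNReal.coe_add, Real.coe_toNNReal _ hM.le,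
          NNReal.coe_one, coe_nnnorm]
        linarith
      simp [Set.indicator_of_notMem hx']
    rw [eLpNorm_congr_ae h0, eLpNorm_zero]
    exact zero_le
  have hmem : MemLp c p ν := MemLp.of_bound hcm.aestronglyMeasurable M hcbd
  have := tendsto_Lp_finite_of_tendsto_ae hp1 hp'
    (fun n => (hbm (ns (ms n))).aestronglyMeasurable) hmem hui hmsae
  exact this
end
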